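/- Let k ≥ 1 and let π be a permutation of Fin k. Then there exists a k-cycle κ of Fin k (a permutation that is a single cycle on all of Fin k, i.e. c(κ) = 1) such that for every natural number ℓ, w_ℓ(π) ≤ w_{ℓ + c(π) − 1}(κ), where w_ℓ denotes the number of primitive factorisations of length ℓ. -/

import Mathlib

/-- Number of cycles of a permutation, counting fixed points. -/
def cyc {k : ℕ} (π : Equiv.Perm (Fin k)) : ℕ :=
  π.cycleType.card + (Finset.univ.filter fun x => π x = x).card

/-- Number of primitive factorisations of `π` into `ℓ` transpositions: sequences
`((s₁,t₁),…,(s_ℓ,t_ℓ))` with `sᵢ < tᵢ`, `t₁ ≤ t₂ ≤ … ≤ t_ℓ` and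
`swap s₁ t₁ * ⋯ * swap s_ℓ t_ℓ = π`. -/
def wfact {k : ℕ} (ℓ : ℕ) (π : Equiv.Perm (Fin k)) : ℕ :=
  (Finset.univ.filter fun f : Fin ℓ → Fin k × Fin k =>
    (∀ i, (f i).1 < (f i).2) ∧ (∀ i j : Fin ℓ, i ≤ j → (f i).2 ≤ (f j).2) ∧
    (List.ofFn fun i => Equiv.swap (f i).1 (f i).2).prod = π).card

namespace WfactAux

open Equiv Equiv.Perm Finset

variable {α : Type*} [Fintype α] [LinearOrder α] [DecidableEq α]

lemma mul_swap_apply_left (g : Perm α) (a b : α) : (g * Equiv.swap a b) a = g b := by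
  simp [Equiv.Perm.mul_apply]

lemma mul_swap_apply_right (g : Perm α) (a b : α) : (g * Equiv.swap a b) b = g a := by
  simp [Equiv.Perm.mul_apply]

lemma mul_swap_apply_other (g : Perm α) {a b x : α} (hxa : x ≠ a) (hxb : x ≠ b) :
    (g * Equiv.swap a b) x = g x := by
  simp [Equiv.Perm.mul_apply, Equiv.swap_apply_of_ne_of_ne hxa hxb]

lemma sameCycle_mul_swap_ab (g : Perm α) {a b : α} (hab : ¬ g.SameCycle a b) :
    (g * Equiv.swap a b).SameCycle a b := by
  have h1 : (g * Equiv.swap a b).SameCycle a (g b) :=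
    ⟨1, by rw [zpow_one, mul_swap_apply_left]⟩
  have h2 : ∀ j : ℕ, (g * Equiv.swap a b).SameCycle (g b) ((g ^ (j+1)) b) := by
    intro j
    induction j with
    | zero => rw [pow_one]
    | succ j ih =>
        by_cases hc : (g ^ (j+1)) b = b
        · have h' : (g ^ (j+1+1)) b = g b := by rw [pow_succ', Equiv.Perm.mul_apply, hc]
          rw [h']
        · have hca : (g ^ (j+1)) b ≠ a := by
            intro h
            exact hab (SameCycle.symm ⟨((j:ℤ)+1), by
              rw [← h]; norm_cast⟩)
          have step : (g * Equiv.swap a b).SameCycle ((g ^ (j+1)) b) ((g ^ (j+1+1)) b) := by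
            refine ⟨1, ?_⟩
            rw [zpow_one, mul_swap_apply_other g hca hc]
            conv_rhs => rw [pow_succ', Equiv.Perm.mul_apply]
          exact ih.trans step
  obtain ⟨m, hm, hmb⟩ : ∃ m : ℕ, 0 < m ∧ (g ^ m) b = b :=
    ⟨orderOf g, orderOf_pos g, by simp [pow_orderOf_eq_one]⟩
  have h3 := h2 (m - 1)
  rw [Nat.sub_add_cancel hm, hmb] at h3
  exact h1.trans h3

lemma sameCycle_mul_swap_of (g : Perm α) {a b : α} (hab : ¬ g.SameCycle a b) {x y : α}
    (h : g.SameCycle x y) : (g * Equiv.swap a b).SameCycle x y := by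
  have key : ∀ z, (g * Equiv.swap a b).SameCycle z (g z) := by
    intro z
    by_cases hza : z = a
    · subst hza
      exact (sameCycle_mul_swap_ab g hab).trans ⟨1, by rw [zpow_one, mul_swap_apply_right]⟩
    · by_cases hzb : z = b
      · subst hzb
        exact (sameCycle_mul_swap_ab g hab).symm.trans
          ⟨1, by rw [zpow_one, mul_swap_apply_left]⟩
      · exact ⟨1, by rw [zpow_one, mul_swap_apply_other g hza hzb]⟩
  obtain ⟨i, -, hi⟩ := h.exists_pow_eq'
  subst hi
  clear h
  induction i with
  | zero => rw [pow_zero]; exact SameCycle.rfl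
  | succ i ih =>
      have h2 := key ((g ^ i) x)
      rw [← Equiv.Perm.mul_apply, ← pow_succ'] at h2
      exact ih.trans h2

lemma sameCycle_mul_swap_iff (g : Perm α) {a b : α} (hab : ¬ g.SameCycle a b) (x y : α) :
    (g * Equiv.swap a b).SameCycle x y ↔
      (g.SameCycle x y ∨ (g.SameCycle x a ∧ g.SameCycle y b) ∨
        (g.SameCycle x b ∧ g.SameCycle y a)) := by
  constructor
  · intro h
    have rstep : ∀ z : α, (g.SameCycle z ((g * Equiv.swap a b) z) ∨
        (g.SameCycle z a ∧ g.SameCycle ((g * Equiv.swap a b) z) b) ∨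
        (g.SameCycle z b ∧ g.SameCycle ((g * Equiv.swap a b) z) a)) := by
      intro z
      by_cases hza : z = a
      · subst hza
        refine Or.inr (Or.inl ⟨SameCycle.rfl, ?_⟩)
        rw [mul_swap_apply_left]
        exact sameCycle_apply_left.mpr SameCycle.rfl
      · by_cases hzb : z = b
        · subst hzb
          refine Or.inr (Or.inr ⟨SameCycle.rfl, ?_⟩)
          rw [mul_swap_apply_right]
          exact sameCycle_apply_left.mpr SameCycle.rfl
        · refine Or.inl ?_
          rw [mul_swap_apply_other g hza hzb]
          exact sameCycle_apply_right.mpr SameCycle.rfl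
    have rtrans : ∀ x y z : α,
        (g.SameCycle x y ∨ (g.SameCycle x a ∧ g.SameCycle y b) ∨
          (g.SameCycle x b ∧ g.SameCycle y a)) →
        (g.SameCycle y z ∨ (g.SameCycle y a ∧ g.SameCycle z b) ∨
          (g.SameCycle y b ∧ g.SameCycle z a)) →
        (g.SameCycle x z ∨ (g.SameCycle x a ∧ g.SameCycle z b) ∨
          (g.SameCycle x b ∧ g.SameCycle z a)) := by
      intro x y z h1 h2
      rcases h1 with h1 | ⟨h1a, h1b⟩ | ⟨h1a, h1b⟩ <;>
        rcases h2 with h2 | ⟨h2a, h2b⟩ | ⟨h2a, h2b⟩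
      · exact Or.inl (h1.trans h2)
      · exact Or.inr (Or.inl ⟨h1.trans h2a, h2b⟩)
      · exact Or.inr (Or.inr ⟨h1.trans h2a, h2b⟩)
      · exact Or.inr (Or.inl ⟨h1a, h2.symm.trans h1b⟩)
      · exact absurd (h2a.symm.trans h1b) hab
      · exact Or.inl (h1a.trans h2b.symm)
      · exact Or.inr (Or.inr ⟨h1a, h2.symm.trans h1b⟩)
      · exact Or.inl (h1a.trans h2b.symm)
      · exact absurd (h1b.symm.trans h2a) hab
    obtain ⟨i, -, hi⟩ := h.exists_pow_eq'
    subst hi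
    clear h
    induction i with
    | zero => rw [pow_zero]; exact Or.inl SameCycle.rfl
    | succ i ih =>
        have h2 := rstep (((g * Equiv.swap a b) ^ i) x)
        rw [← Equiv.Perm.mul_apply, ← pow_succ'] at h2
        exact rtrans _ _ _ ih h2
  · rintro (h | ⟨h1, h2⟩ | ⟨h1, h2⟩)
    · exact sameCycle_mul_swap_of g hab h
    · exact ((sameCycle_mul_swap_of g hab h1).trans (sameCycle_mul_swap_ab g hab)).trans
        (sameCycle_mul_swap_of g hab h2.symm)
    · exact ((sameCycle_mul_swap_of g hab h1).trans (sameCycle_mul_swap_ab g hab).symm).trans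
        (sameCycle_mul_swap_of g hab h2.symm)

open scoped Classical in
/-- The set of elements that are minimal in their cycle. -/
noncomputable def minSet (g : Perm α) : Finset α :=
  Finset.univ.filter fun x => ∀ y, g.SameCycle x y → x ≤ y

lemma mem_minSet {g : Perm α} {x : α} : x ∈ minSet g ↔ ∀ y, g.SameCycle x y → x ≤ y := by
  classical
  simp [minSet]

lemma exists_classMin (g : Perm α) (a : α) :
    ∃ u, g.SameCycle a u ∧ ∀ y, g.SameCycle u y → u ≤ y := by
  classical
  have hne : (Finset.univ.filter fun y => g.SameCycle a y).Nonempty :=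
    ⟨a, by simp [SameCycle.rfl]⟩
  set u := (Finset.univ.filter fun y => g.SameCycle a y).min' hne with hu
  have hmem := Finset.min'_mem (Finset.univ.filter fun y => g.SameCycle a y) hne
  rw [Finset.mem_filter] at hmem
  refine ⟨u, hmem.2, fun y hy => ?_⟩
  exact Finset.min'_le _ _ (by
    rw [Finset.mem_filter]
    exact ⟨Finset.mem_univ _, hmem.2.trans hy⟩)

lemma card_minSet_eq (g : Perm α) [DecidablePred fun x => g x = x] :
    (minSet g).card = Multiset.card g.cycleType +
      (Finset.univ.filter fun x => g x = x).card := by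
  classical
  have hsplit := (Finset.card_filter_add_card_filter_not
    (s := minSet g) (p := fun x => g x = x)).symm
  have h1 : (minSet g).filter (fun x => g x = x) = Finset.univ.filter fun x => g x = x := by
    ext x
    simp only [Finset.mem_filter, mem_minSet, Finset.mem_univ, true_and]
    constructor
    · exact fun h => h.2
    · exact fun h => ⟨fun y hy => le_of_eq (hy.eq_of_left h), h⟩
  have h2 : ((minSet g).filter fun x => ¬ g x = x).card = g.cycleFactorsFinset.card := by
    apply Finset.card_bij (fun x _ => g.cycleOf x)
    · intro x hx
      rw [Finset.mem_filter] at hx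
      exact cycleOf_mem_cycleFactorsFinset_iff.mpr (mem_support.mpr hx.2)
    · intro x hx y hy hxy
      rw [Finset.mem_filter, mem_minSet] at hx hy
      have hyy : y ∈ (g.cycleOf y).support :=
        mem_support_cycleOf_iff.mpr ⟨SameCycle.rfl, mem_support.mpr hy.2⟩
      rw [← hxy] at hyy
      have hsxy : g.SameCycle x y := (mem_support_cycleOf_iff.mp hyy).1
      exact le_antisymm (hx.1 y hsxy) (hy.1 x hsxy.symm)
    · intro c hc
      have hcc := mem_cycleFactorsFinset_iff.mp hc
      have hne : c.support.Nonempty :=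
        Finset.nonempty_iff_ne_empty.mpr fun hh => hcc.1.ne_one (support_eq_empty_iff.mp hh)
      set x := c.support.min' hne with hx
      have hxs : x ∈ c.support := Finset.min'_mem _ hne
      have hcx : c = g.cycleOf x := cycle_is_cycleOf hxs hc
      have hxg : g x ≠ x := by
        have hx' := mem_support.mp hxs
        rwa [hcc.2 x hxs] at hx'
      refine ⟨x, ?_, hcx.symm⟩
      rw [Finset.mem_filter, mem_minSet]
      refine ⟨fun y hy => ?_, hxg⟩
      have : y ∈ c.support := by
        rw [hcx]
        exact mem_support_cycleOf_iff.mpr ⟨hy, mem_support.mpr hxg⟩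
      exact Finset.min'_le _ _ this
  have h3 : Multiset.card g.cycleType = g.cycleFactorsFinset.card := by
    rw [cycleType_def, Multiset.card_map]
    rfl
  rw [hsplit, h2, h3, add_comm]
  congr 1
  rw [h1]

lemma minSet_mul_swap (g : Perm α) {a b u v : α} (hab : ¬ g.SameCycle a b)
    (hua : g.SameCycle a u) (hu : ∀ y, g.SameCycle u y → u ≤ y)
    (hvb : g.SameCycle b v) (hv : ∀ y, g.SameCycle v y → v ≤ y)
    (huv : u < v) : minSet (g * Equiv.swap a b) = (minSet g).erase v := by
  ext x
  rw [mem_minSet, Finset.mem_erase, mem_minSet]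
  constructor
  · intro H
    have hmin : ∀ y, g.SameCycle x y → x ≤ y := fun y hy =>
      H y ((sameCycle_mul_swap_iff g hab x y).mpr (Or.inl hy))
    refine ⟨?_, hmin⟩
    rintro rfl
    have : (g * Equiv.swap a b).SameCycle x u :=
      (sameCycle_mul_swap_iff g hab x u).mpr (Or.inr (Or.inr ⟨hvb.symm, hua.symm⟩))
    exact absurd (H u this) (not_le.mpr huv)
  · rintro ⟨hxv, hmin⟩ y hy
    rw [sameCycle_mul_swap_iff g hab x y] at hy
    rcases hy with h | ⟨h1, h2⟩ | ⟨h1, h2⟩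
    · exact hmin y h
    · have hxu : x = u :=
        le_antisymm (hmin u (h1.trans hua)) (hu x (hua.symm.trans h1.symm))
      subst hxu
      exact le_of_lt (lt_of_lt_of_le huv (hv y (hvb.symm.trans h2.symm)))
    · exact absurd (le_antisymm (hmin v (h1.trans hvb)) (hv x (hvb.symm.trans h1.symm))) hxv

lemma card_minSet_mul_swap (g : Perm α) {a b : α} (hab : ¬ g.SameCycle a b) :
    (minSet (g * Equiv.swap a b)).card + 1 = (minSet g).card := by
  obtain ⟨u, hua, hu⟩ := exists_classMin g a
  obtain ⟨v, hvb, hv⟩ := exists_classMin g b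
  have huv : u ≠ v := by
    rintro rfl
    exact hab (hua.trans hvb.symm)
  have humem : u ∈ minSet g := mem_minSet.mpr hu
  have hvmem : v ∈ minSet g := mem_minSet.mpr hv
  rcases lt_or_gt_of_ne huv with h | h
  · rw [minSet_mul_swap g hab hua hu hvb hv h]
    exact Finset.card_erase_add_one hvmem
  · rw [Equiv.swap_comm a b,
      minSet_mul_swap g (fun hh => hab hh.symm) hvb hv hua hu h]
    exact Finset.card_erase_add_one humem

end WfactAux

open Equiv Equiv.Perm Finset WfactAux

lemma cyc_eq_card_minSet {k : ℕ} (g : Equiv.Perm (Fin k)) : cyc g = (minSet g).card := by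
  unfold cyc
  rw [card_minSet_eq]

lemma cyc_mul_swap {k : ℕ} (g : Equiv.Perm (Fin k)) {a b : Fin k}
    (hab : ¬ g.SameCycle a b) : cyc (g * Equiv.swap a b) + 1 = cyc g := by
  have h1 := cyc_eq_card_minSet (g * Equiv.swap a b)
  have h2 := cyc_eq_card_minSet g
  have h3 := card_minSet_mul_swap g hab
  omega

lemma one_le_cyc {k : ℕ} (hk : 1 ≤ k) (g : Equiv.Perm (Fin k)) : 1 ≤ cyc g := by
  have h2 := cyc_eq_card_minSet g
  obtain ⟨u, -, hu⟩ := exists_classMin g ⟨0, hk⟩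
  have h3 : 0 < (minSet g).card := Finset.card_pos.mpr ⟨u, mem_minSet.mpr hu⟩
  omega

lemma wfact_le_mul_swap {n ℓ : ℕ} (π : Equiv.Perm (Fin (n+1))) {a : Fin (n+1)}
    (ha : a < Fin.last n) :
    wfact ℓ π ≤ wfact (ℓ+1) (π * Equiv.swap a (Fin.last n)) := by
  rw [wfact, wfact]
  apply Finset.card_le_card_of_injOn
    (fun f : Fin ℓ → Fin (n+1) × Fin (n+1) =>
      (Fin.snoc f (a, Fin.last n) : Fin (ℓ+1) → Fin (n+1) × Fin (n+1)))
  · intro f hf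
    simp only [Finset.mem_coe] at hf ⊢; rw [Finset.mem_filter] at hf ⊢; beta_reduce
    obtain ⟨-, h1, h2, h3⟩ := hf
    refine ⟨Finset.mem_univ _, ?_, ?_, ?_⟩
    · intro i
      induction i using Fin.lastCases with
      | last => rw [Fin.snoc_last]; exact ha
      | cast i => rw [Fin.snoc_castSucc]; exact h1 i
    · intro i j hij
      induction j using Fin.lastCases with
      | last => rw [Fin.snoc_last]; exact Fin.le_last _
      | cast j =>
          induction i using Fin.lastCases with
          | last =>
              exact absurd (lt_of_le_of_lt hij (Fin.castSucc_lt_last j)) (lt_irrefl _)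
          | cast i =>
              rw [Fin.snoc_castSucc, Fin.snoc_castSucc]
              exact h2 i j (by rwa [Fin.castSucc_le_castSucc_iff] at hij)
    · rw [List.ofFn_succ']
      simp only [Fin.snoc_castSucc, Fin.snoc_last]
      rw [List.prod_concat, h3]
  · intro f1 hf1 f2 hf2 hf
    funext i
    have h := congrFun hf i.castSucc
    simp only [Fin.snoc_castSucc] at h
    exact h

lemma exists_not_sameCycle_last {n : ℕ} (π : Equiv.Perm (Fin (n+1)))
    (h : 2 ≤ cyc π) : ∃ a : Fin (n+1), a ≠ Fin.last n ∧ ¬ π.SameCycle a (Fin.last n) := by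
  obtain ⟨w, hwl, hw⟩ := exists_classMin π (Fin.last n)
  rw [cyc_eq_card_minSet] at h
  obtain ⟨x, hx, hxw⟩ := (Finset.one_lt_card_iff_nontrivial.mp h).exists_ne w
  rw [mem_minSet] at hx
  have hnot : ¬ π.SameCycle x (Fin.last n) := by
    intro hc
    exact hxw (le_antisymm (hx w (hc.trans hwl)) (hw x (hwl.symm.trans hc.symm)))
  refine ⟨x, ?_, hnot⟩
  rintro rfl
  exact hnot (Equiv.Perm.SameCycle.rfl)

lemma wfact_aux {n : ℕ} : ∀ (m : ℕ) (π : Equiv.Perm (Fin (n+1))), cyc π = m + 1 →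
    ∃ κ : Equiv.Perm (Fin (n+1)), cyc κ = 1 ∧ ∀ ℓ : ℕ, wfact ℓ π ≤ wfact (ℓ + m) κ := by
  intro m
  induction m with
  | zero => exact fun π h => ⟨π, h, fun ℓ => le_rfl⟩
  | succ m ih =>
      intro π h
      obtain ⟨a, hal, ha⟩ := exists_not_sameCycle_last π (by omega)
      have hc : cyc (π * Equiv.swap a (Fin.last n)) = m + 1 := by
        have := cyc_mul_swap π ha
        omega
      obtain ⟨κ, hκ, hw⟩ := ih (π * Equiv.swap a (Fin.last n)) hc
      refine ⟨κ, hκ, fun ℓ => ?_⟩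
      have hlt : a < Fin.last n := lt_of_le_of_ne (Fin.le_last a) hal
      calc wfact ℓ π ≤ wfact (ℓ + 1) (π * Equiv.swap a (Fin.last n)) :=
            wfact_le_mul_swap π hlt
        _ ≤ wfact (ℓ + 1 + m) κ := hw (ℓ + 1)
        _ = wfact (ℓ + (m + 1)) κ := by rw [Nat.add_right_comm, Nat.add_assoc]

/-- Theorem: every permutation `π` has a full cycle `κ` such that for all `ℓ`,
`w_ℓ(π) ≤ w_{ℓ + c(π) − 1}(κ)`. -/
theorem wfact_le_wfact_cycle {k : ℕ} (hk : 1 ≤ k) (π : Equiv.Perm (Fin k)) :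
    ∃ κ : Equiv.Perm (Fin k), cyc κ = 1 ∧
      ∀ ℓ : ℕ, wfact ℓ π ≤ wfact (ℓ + cyc π - 1) κ := by
  obtain ⟨n, rfl⟩ : ∃ n, k = n + 1 := ⟨k - 1, by omega⟩
  have hpos : 1 ≤ cyc π := one_le_cyc (by omega) π
  obtain ⟨κ, hκ, hw⟩ := wfact_aux (cyc π - 1) π (by omega)
  refine ⟨κ, hκ, fun ℓ => ?_⟩
  have := hw ℓ
  have harith : ℓ + cyc π - 1 = ℓ + (cyc π - 1) := by omega
  rwa [harith]
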